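/- Robust Walrasian prices exist iff the optimal allocation is unique: if there is a unique partition (S_1,...,S_m) maximizing ∑_i v_i(S_i), then there is a price vector p such that every p' with |p'_j - p_j| ≤ 1/(2n) for all j is Walrasian; hence the set of Walrasian prices is a full-dimensional convex set and every price in its interior makes each buyer's demanded bundle unique (D(v_i, p') = {S_i}) with these bundles partitioning the items. -/

import Mathlib

open Finset

namespace RobustWalras

variable {m n : ℕ}

def pers (δ : ℝ) (p : Fin n → ℝ) (Hi : Finset (Fin n)) : Fin n → ℝ :=
  fun j => if j ∈ Hi then p j else p j + δ

def IsDem (V : Fin m → Finset (Fin n) → ℝ) (i : Fin m) (ρ : Fin n → ℝ)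
    (D : Finset (Fin n)) : Prop :=
  ∀ T, V i T - ∑ j ∈ T, ρ j ≤ V i D - ∑ j ∈ D, ρ j

def GS (V : Fin m → Finset (Fin n) → ℝ) : Prop :=
  ∀ (i : Fin m) (p p' : Fin n → ℝ), (∀ j, p j ≤ p' j) →
    ∀ Sd, IsDem V i p Sd →
      ∃ Sd', IsDem V i p' Sd' ∧ ∀ j ∈ Sd, p j = p' j → j ∈ Sd'

lemma pers_sum (δ : ℝ) (p : Fin n → ℝ) (Hi T : Finset (Fin n)) :
    ∑ j ∈ T, pers δ p Hi j = (∑ j ∈ T, p j) + δ * (T \ Hi).card := by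
  have : ∀ j, pers δ p Hi j = p j + (if j ∈ Hi then (0:ℝ) else δ) := by
    intro j; unfold pers; split <;> simp
  simp only [this, Finset.sum_add_distrib]
  congr 1
  rw [Finset.sum_ite, Finset.sum_const, Finset.sum_const]
  simp [Finset.sdiff_eq_filter, mul_comm]

lemma sum_partition (T : Fin m → Finset (Fin n))
    (hd : ∀ i k, i ≠ k → Disjoint (T i) (T k)) (hc : ∀ j, ∃ i, j ∈ T i)
    (f : Fin n → ℝ) : ∑ i, ∑ j ∈ T i, f j = ∑ j, f j := by
  rw [← Finset.sum_biUnion]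
  · congr 1
    ext j
    simp only [Finset.mem_biUnion, Finset.mem_univ, true_and]
    exact ⟨fun _ => trivial, fun _ => hc j⟩
  · intro i _ k _ hik
    exact hd i k hik

lemma card_partition (T : Fin m → Finset (Fin n))
    (hd : ∀ i k, i ≠ k → Disjoint (T i) (T k)) (hc : ∀ j, ∃ i, j ∈ T i) :
    ∑ i, ((T i).card : ℝ) = n := by
  have := sum_partition T hd hc (fun _ => (1:ℝ))
  simpa [Finset.card_univ, mul_comm] using this

/-- difference of sums over two sets. -/
lemma sum_sdiff_diff (U Sx : Finset (Fin n)) (f : Fin n → ℝ) :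
    (∑ j ∈ U, f j) - (∑ j ∈ Sx, f j)
      = (∑ j ∈ U \ Sx, f j) - (∑ j ∈ Sx \ U, f j) := by
  have h1 : (∑ j ∈ U ∩ Sx, f j) + (∑ j ∈ U \ Sx, f j) = ∑ j ∈ U, f j := by
    rw [Finset.sum_inter_add_sum_sdiff]
  have h2 : (∑ j ∈ Sx ∩ U, f j) + (∑ j ∈ Sx \ U, f j) = ∑ j ∈ Sx, f j := by
    rw [Finset.sum_inter_add_sum_sdiff]
  have h3 : U ∩ Sx = Sx ∩ U := Finset.inter_comm U Sx
  rw [← h1, ← h2, h3]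
  ring


/-- the auction invariant -/
structure Inv (V : Fin m → Finset (Fin n) → ℝ) (δ M Vb : ℝ)
    (p : Fin n → ℝ) (H D : Fin m → Finset (Fin n)) (steps : Fin n → ℕ) : Prop where
  disj : ∀ i k, i ≠ k → Disjoint (H i) (H k)
  sub : ∀ i, H i ⊆ D i
  dem : ∀ i, IsDem V i (pers δ p (H i)) (D i)
  price : ∀ j, p j = -M + steps j * δ
  ub : ∀ j, p j ≤ 2 * Vb
  low : ∀ j, (∀ i, j ∉ H i) → steps j = 0

/-- marginal-value bound for an item in a demanded set. -/
lemma IsDem.marg {V : Fin m → Finset (Fin n) → ℝ} {i : Fin m} {ρ : Fin n → ℝ}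
    {D : Finset (Fin n)} (h : IsDem V i ρ D) {j : Fin n} (hj : j ∈ D) :
    ρ j ≤ V i D - V i (D.erase j) := by
  have := h (D.erase j)
  have hsum : ∑ k ∈ D, ρ k = ρ j + ∑ k ∈ D.erase j, ρ k :=
    (Finset.add_sum_erase D ρ hj).symm
  linarith

variable {m n : ℕ}

lemma step_lemma (V : Fin m → Finset (Fin n) → ℝ) (δ M Vb : ℝ) (hδ : 0 < δ)
    (hVb : ∀ i T, |V i T| ≤ Vb) (hgs : GS V)
    (p : Fin n → ℝ) (H D : Fin m → Finset (Fin n)) (steps : Fin n → ℕ)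
    (inv : Inv V δ M Vb p H D steps) (i : Fin m) (hne : D i ≠ H i) :
    ∃ p' H' D' steps', Inv V δ M Vb p' H' D' steps' ∧
      (∑ j, steps j) < (∑ j, steps' j) := by
  classical
  set Z : Finset (Fin n) := D i \ H i with hZ
  have hZne : Z.Nonempty := by
    rw [hZ, Finset.sdiff_nonempty]
    intro hsub
    exact hne (Finset.Subset.antisymm hsub (inv.sub i))
  have hZHi : ∀ j ∈ Z, j ∉ H i := fun j hj => (Finset.mem_sdiff.1 hj).2
  have hZDi : Z ⊆ D i := Finset.sdiff_subset
  have hDieq : D i = H i ∪ Z := by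
    rw [hZ, Finset.union_sdiff_of_subset (inv.sub i)]
  set p' : Fin n → ℝ := fun j => if j ∈ Z then p j + δ else p j with hp'
  set H' : Fin m → Finset (Fin n) := fun k => if k = i then D i else H k \ Z with hH'
  set steps' : Fin n → ℕ := fun j => if j ∈ Z then steps j + 1 else steps j with hsteps'
  -- the actor's personalized prices do not change
  have persI : pers δ p' (H' i) = pers δ p (H i) := by
    funext j
    have hHi : H' i = D i := by rw [hH']; simp
    by_cases hj1 : j ∈ H i
    · have hjD : j ∈ D i := inv.sub i hj1
      have hjZ : j ∉ Z := by rw [hZ]; simp [hj1]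
      simp [pers, hHi, hjD, hj1, hp', hjZ]
    · by_cases hj2 : j ∈ Z
      · have hjD : j ∈ D i := hZDi hj2
        simp [pers, hHi, hjD, hj1, hp', hj2]
      · have hjD : j ∉ D i := by rw [hDieq]; simp [hj1, hj2]
        simp [pers, hHi, hjD, hj1, hp', hj2]
  -- existence of new demanded supersets
  have hex : ∀ k, ∃ Dk', IsDem V k (pers δ p' (H' k)) Dk' ∧ H' k ⊆ Dk' := by
    intro k
    by_cases hk : k = i
    · subst hk
      refine ⟨D k, ?_, ?_⟩
      · rw [persI]; exact inv.dem k
      · rw [hH']; simp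
    · have hHk : H' k = H k \ Z := by rw [hH']; simp [hk]
      have mono : ∀ j, pers δ p (H k) j ≤ pers δ p' (H' k) j := by
        intro j
        rw [hHk]
        by_cases hj : j ∈ Z
        · have hj2 : j ∉ H k \ Z := by simp [hj]
          have h3 : p' j = p j + δ := by rw [hp']; simp [hj]
          by_cases hj4 : j ∈ H k <;> simp [pers, hj2, hj4, h3] <;> linarith
        · have h3 : p' j = p j := by rw [hp']; simp [hj]
          by_cases hj4 : j ∈ H k
          · have : j ∈ H k \ Z := by simp [hj, hj4]
            simp [pers, this, hj4, h3]
          · have : j ∉ H k \ Z := by simp [hj4]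
            simp [pers, this, hj4, h3]
      have eqoff : ∀ j, j ∉ Z → pers δ p (H k) j = pers δ p' (H' k) j := by
        intro j hj
        rw [hHk]
        have h3 : p' j = p j := by rw [hp']; simp [hj]
        by_cases hj4 : j ∈ H k
        · have : j ∈ H k \ Z := by simp [hj, hj4]
          simp [pers, this, hj4, h3]
        · have : j ∉ H k \ Z := by simp [hj4]
          simp [pers, this, hj4, h3]
      obtain ⟨Dk', hdem', hmem⟩ := hgs k _ _ mono (D k) (inv.dem k)
      refine ⟨Dk', hdem', ?_⟩
      intro j hj
      rw [hHk] at hj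
      have hjZ : j ∉ Z := (Finset.mem_sdiff.1 hj).2
      exact hmem j (inv.sub k (Finset.mem_sdiff.1 hj).1) (eqoff j hjZ)
  choose D' hD'dem hD'sub using hex
  refine ⟨p', H', D', steps', ⟨?_, hD'sub, hD'dem, ?_, ?_, ?_⟩, ?_⟩
  · -- disjointness
    intro k k' hkk'
    have key : ∀ k'', k'' ≠ i → H' k'' = H k'' \ Z := by
      intro k'' h; rw [hH']; simp [h]
    have keyi : H' i = H i ∪ Z := by rw [hH']; simp; exact hDieq
    by_cases hk : k = i
    · have hk2 : k' ≠ i := fun h => hkk' (hk.trans h.symm)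
      rw [hk, keyi, key k' hk2]
      refine Finset.disjoint_union_left.2 ⟨?_, ?_⟩
      · exact (inv.disj i k' (hk ▸ hkk')).mono_right Finset.sdiff_subset
      · exact Finset.disjoint_sdiff
    · by_cases hk2 : k' = i
      · rw [hk2, keyi, key k hk]
        refine Finset.disjoint_union_right.2 ⟨?_, ?_⟩
        · exact (inv.disj k i (hk2 ▸ hkk')).mono_left Finset.sdiff_subset
        · exact Finset.sdiff_disjoint
      · rw [key k hk, key k' hk2]
        exact (inv.disj k k' hkk').mono Finset.sdiff_subset Finset.sdiff_subset
  · -- price equation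
    intro j
    by_cases hj : j ∈ Z
    · have h1 : p' j = p j + δ := by rw [hp']; simp [hj]
      have h2 : steps' j = steps j + 1 := by rw [hsteps']; simp [hj]
      rw [h1, h2, inv.price j]
      push_cast
      ring
    · have h1 : p' j = p j := by rw [hp']; simp [hj]
      have h2 : steps' j = steps j := by rw [hsteps']; simp [hj]
      rw [h1, h2, inv.price j]
  · -- upper bound
    intro j
    by_cases hj : j ∈ Z
    · have h1 : p' j = p j + δ := by rw [hp']; simp [hj]
      have hmarg := (inv.dem i).marg (hZDi hj)
      have hpers : pers δ p (H i) j = p j + δ := by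
        simp [pers, hZHi j hj]
      have b1 := (abs_le.1 (hVb i (D i))).2
      have b2 := (abs_le.1 (hVb i ((D i).erase j))).1
      rw [hpers] at hmarg
      rw [h1]
      linarith
    · have h1 : p' j = p j := by rw [hp']; simp [hj]
      rw [h1]; exact inv.ub j
  · -- unheld items never raised
    intro j hj
    have hjZ : j ∉ Z := by
      intro hjZ
      have : j ∈ H' i := by rw [hH']; simp [hZDi hjZ]
      exact hj i this
    have h2 : steps' j = steps j := by rw [hsteps']; simp [hjZ]
    rw [h2]
    apply inv.low
    intro k
    by_cases hk : k = i
    · subst hk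
      intro hjH
      have : j ∈ H' k := by rw [hH']; simp [inv.sub k hjH]
      exact hj k this
    · intro hjH
      have : j ∈ H' k := by rw [hH']; simp [hk, hjH, hjZ]
      exact hj k this
  · -- measure increases
    have : ∑ j, steps' j = (∑ j, steps j) + Z.card := by
      rw [hsteps']
      have : ∀ j, (if j ∈ Z then steps j + 1 else steps j)
          = steps j + (if j ∈ Z then 1 else 0) := by
        intro j; split <;> simp
      simp only [this, Finset.sum_add_distrib]
      congr 1
      rw [Finset.sum_ite_mem, Finset.univ_inter, Finset.sum_const, smul_eq_mul, mul_one]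
    rw [this]
    have := Finset.Nonempty.card_pos hZne
    omega
lemma run_lemma (V : Fin m → Finset (Fin n) → ℝ) (δ M Vb : ℝ) (hδ : 0 < δ)
    (hVb : ∀ i T, |V i T| ≤ Vb) (hgs : GS V) (hm : 0 < m)
    (hM : M = 2*Vb + δ + 1) (B0 : ℕ) (hB0 : (2*Vb + M)/δ ≤ B0) :
    ∀ (fuel : ℕ) (p : Fin n → ℝ) (H D : Fin m → Finset (Fin n)) (steps : Fin n → ℕ),
      Inv V δ M Vb p H D steps →
      n * B0 + 1 ≤ (∑ j, steps j) + fuel →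
      ∃ (q : Fin n → ℝ) (Hf : Fin m → Finset (Fin n)),
        (∀ i k, i ≠ k → Disjoint (Hf i) (Hf k)) ∧ (∀ j, ∃ i, j ∈ Hf i) ∧
        (∀ j, -M ≤ q j ∧ q j ≤ 2*Vb) ∧
        ∀ i T, V i T - ∑ j ∈ T, q j - δ * ((T \ Hf i).card) ≤ V i (Hf i) - ∑ j ∈ Hf i, q j := by
  intro fuel
  induction fuel with
  | zero =>
    intro p H D steps inv hfuel
    exfalso
    have hstep : ∀ j, steps j ≤ B0 := by
      intro j
      have h1 := inv.price j
      have h2 := inv.ub j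
      have h3 : (steps j : ℝ) * δ ≤ 2*Vb + M := by rw [h1] at h2; linarith
      have h4 : (steps j : ℝ) ≤ (2*Vb + M)/δ := by
        rw [le_div_iff₀ hδ]; exact h3
      have h5 : (steps j : ℝ) ≤ (B0 : ℝ) := le_trans h4 hB0
      exact_mod_cast h5
    have hsum : (∑ j, steps j) ≤ n * B0 := by
      calc (∑ j, steps j) ≤ (Finset.univ.card) • B0 :=
            Finset.sum_le_card_nsmul _ _ _ (fun j _ => hstep j)
        _ = n * B0 := by simp [Finset.card_univ, smul_eq_mul]
    omega
  | succ fuel ih =>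
    intro p H D steps inv hfuel
    by_cases hterm : ∀ i, D i = H i
    · refine ⟨p, H, inv.disj, ?_, ?_, ?_⟩
      · -- coverage
        intro j
        by_contra hjc
        push_neg at hjc
        have hsteps0 : steps j = 0 := inv.low j hjc
        have hpj : p j = -M := by rw [inv.price j, hsteps0]; simp
        set i0 : Fin m := ⟨0, hm⟩
        have dem := inv.dem i0
        rw [hterm i0] at dem
        have hdem := dem (insert j (H i0))
        have hsumins : ∑ k ∈ insert j (H i0), pers δ p (H i0) k
            = pers δ p (H i0) j + ∑ k ∈ H i0, pers δ p (H i0) k :=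
          Finset.sum_insert (hjc i0)
        have hρ : pers δ p (H i0) j = p j + δ := by simp [pers, hjc i0]
        have b1 := (abs_le.1 (hVb i0 (insert j (H i0)))).1
        have b2 := (abs_le.1 (hVb i0 (H i0))).2
        rw [hsumins, hρ, hpj, hM] at hdem
        linarith
      · -- price bounds
        intro j
        constructor
        · rw [inv.price j]
          have : (0:ℝ) ≤ (steps j : ℝ) * δ := by positivity
          linarith
        · exact inv.ub j
      · -- approximate optimality
        intro i T
        have dem := inv.dem i
        rw [hterm i] at dem
        have hdem := dem T
        rw [pers_sum, pers_sum] at hdem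
        have hz : ((H i \ H i).card : ℝ) = 0 := by simp
        rw [hz] at hdem
        linarith
    · push_neg at hterm
      obtain ⟨i, hne⟩ := hterm
      obtain ⟨p', H', D', steps', inv', hlt⟩ :=
        step_lemma V δ M Vb hδ hVb hgs p H D steps inv i hne
      exact ih p' H' D' steps' inv' (by omega)

lemma exists_approx_eq (hm : 0 < m) (V : Fin m → Finset (Fin n) → ℝ)
    (hgs : GS V) (δ : ℝ) (hδ : 0 < δ) (Vb : ℝ) (hVb : ∀ i T, |V i T| ≤ Vb) :
    ∃ (q : Fin n → ℝ) (Hf : Fin m → Finset (Fin n)),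
      (∀ i k, i ≠ k → Disjoint (Hf i) (Hf k)) ∧ (∀ j, ∃ i, j ∈ Hf i) ∧
      (∀ j, -(2*Vb + δ + 1) ≤ q j ∧ q j ≤ 2*Vb) ∧
      ∀ i T, V i T - ∑ j ∈ T, q j - δ * ((T \ Hf i).card) ≤ V i (Hf i) - ∑ j ∈ Hf i, q j := by
  classical
  have hVb0 : 0 ≤ Vb := le_trans (abs_nonneg _) (hVb ⟨0, hm⟩ ∅)
  set M : ℝ := 2*Vb + δ + 1 with hM
  have hMpos : 0 < M := by rw [hM]; linarith
  set p0 : Fin n → ℝ := fun _ => -M with hp0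
  have hD0 : ∀ i : Fin m, ∃ D0, IsDem V i (pers δ p0 ∅) D0 := by
    intro i
    obtain ⟨D0, -, hD0⟩ := Finset.exists_max_image (Finset.univ : Finset (Finset (Fin n)))
      (fun T => V i T - ∑ j ∈ T, pers δ p0 ∅ j) ⟨∅, Finset.mem_univ _⟩
    exact ⟨D0, fun T => hD0 T (Finset.mem_univ _)⟩
  choose D0 hD0dem using hD0
  have inv0 : Inv V δ M Vb p0 (fun _ => ∅) D0 (fun _ => 0) := by
    refine ⟨?_, ?_, ?_, ?_, ?_, ?_⟩
    · intro i k _; simp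
    · intro i; exact Finset.empty_subset _
    · exact hD0dem
    · intro j; simp [hp0]
    · intro j; rw [hp0]; simp only; linarith
    · intro j _; rfl
  obtain ⟨q, Hf, h1, h2, hb, h3⟩ := run_lemma V δ M Vb hδ hVb hgs hm rfl
    (Nat.ceil ((2*Vb + M)/δ)) (Nat.le_ceil _) (n * (Nat.ceil ((2*Vb + M)/δ)) + 1)
    p0 (fun _ => ∅) D0 (fun _ => 0) inv0 (by simp)
  refine ⟨q, Hf, h1, h2, ?_, h3⟩
  intro j
  have := hb j
  rw [hM] at this
  exact this

lemma sum_w (Si A : Finset (Fin n)) :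
    (∑ j ∈ A, (if j ∈ Si then (-1:ℝ) else 1))
      = ((A \ Si).card : ℝ) - ((A ∩ Si).card : ℝ) := by
  rw [Finset.sum_ite, Finset.sum_const, Finset.sum_const]
  rw [Finset.filter_mem_eq_inter, ← Finset.sdiff_eq_filter]
  simp [smul_eq_mul]
  ring

lemma w_diff (Si A : Finset (Fin n)) :
    (∑ j ∈ Si, (if j ∈ Si then (-1:ℝ) else 1))
      - (∑ j ∈ A, (if j ∈ Si then (-1:ℝ) else 1))
      = -((((Si \ A).card : ℝ)) + (((A \ Si).card : ℝ))) := by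
  rw [sum_w, sum_w]
  have h1 : Si ∩ Si = Si := Finset.inter_self Si
  have h2 : (Si \ Si) = ∅ := Finset.sdiff_self Si
  rw [h1, h2]
  have h3 : (Si ∩ A).card + (Si \ A).card = Si.card := Finset.card_inter_add_card_sdiff Si A
  have h4 : A ∩ Si = Si ∩ A := Finset.inter_comm A Si
  rw [h4]
  have h5 : ((Si ∩ A).card : ℝ) + ((Si \ A).card : ℝ) = (Si.card : ℝ) := by exact_mod_cast h3
  simp only [Finset.card_empty, Nat.cast_zero]
  linarith

/-- the scaled economy with a handicap against `S`. -/
def Vt (c : ℝ) (v : Fin m → Finset (Fin n) → ℤ) (S : Fin m → Finset (Fin n))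
    (i : Fin m) (T : Finset (Fin n)) : ℝ :=
  c * (v i T : ℝ) + ∑ j ∈ T, (if j ∈ S i then (-1:ℝ) else 1)

lemma GS_Vt (c : ℝ) (v : Fin m → Finset (Fin n) → ℤ) (S : Fin m → Finset (Fin n))
    (hcpos : 0 < c)
    (hGS : ∀ (i : Fin m) (p p' : Fin n → ℝ), (∀ j, p j ≤ p' j) →
      ∀ Sd : Finset (Fin n),
        (∀ T, (v i T : ℝ) - ∑ j ∈ T, p j ≤ (v i Sd : ℝ) - ∑ j ∈ Sd, p j) →
        ∃ Sd', (∀ T, (v i T : ℝ) - ∑ j ∈ T, p' j ≤ (v i Sd' : ℝ) - ∑ j ∈ Sd', p' j) ∧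
          ∀ j ∈ Sd, p j = p' j → j ∈ Sd') :
    GS (Vt c v S) := by
  intro i p p' hmono Sd hSd
  set w : Fin n → ℝ := fun j => if j ∈ S i then (-1:ℝ) else 1 with hw
  set φ : (Fin n → ℝ) → (Fin n → ℝ) := fun q j => (q j - w j)/c with hφ
  have key : ∀ (q : Fin n → ℝ) (T : Finset (Fin n)),
      (v i T : ℝ) - ∑ j ∈ T, φ q j = (Vt c v S i T - ∑ j ∈ T, q j)/c := by
    intro q T
    rw [eq_div_iff hcpos.ne']
    have hsum : ∑ j ∈ T, φ q j = ((∑ j ∈ T, q j) - ∑ j ∈ T, w j)/c := by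
      rw [hφ]
      simp only
      rw [← Finset.sum_div, Finset.sum_sub_distrib]
    rw [hsum, Vt]
    field_simp
    ring
  have hSdv : ∀ T, (v i T : ℝ) - ∑ j ∈ T, φ p j ≤ (v i Sd : ℝ) - ∑ j ∈ Sd, φ p j := by
    intro T
    rw [key, key]
    exact (div_le_div_iff_of_pos_right hcpos).2 (hSd T)
  have hmono' : ∀ j, φ p j ≤ φ p' j := by
    intro j
    rw [hφ]
    simp only
    exact (div_le_div_iff_of_pos_right hcpos).2 (by linarith [hmono j])
  obtain ⟨Sd', hdem', hmem⟩ := hGS i (φ p) (φ p') hmono' Sd hSdv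
  refine ⟨Sd', ?_, ?_⟩
  · intro T
    have := hdem' T
    rw [key, key] at this
    exact (div_le_div_iff_of_pos_right hcpos).1 this
  · intro j hj hpj
    refine hmem j hj ?_
    rw [hφ]
    simp only [hpj]

end RobustWalras

open Topology in
set_option maxHeartbeats 2000000 in
/-- **Robust Walrasian prices exist when the optimal allocation is unique.** If there is
a unique partition `(S 1, ..., S m)` of the `n` unit-supply items maximizing
`∑ i, v i (S i)` among buyers with gross substitute valuations, then there is a price
vector `p` such that every `p'` with `|p' j - p j| ≤ 1/(2n)` for all `j` is Walrasian;
hence the set `W` of Walrasian prices is a (full-dimensional) convex set and every price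
in its interior makes each buyer's demanded bundle unique and equal to `S i`, so these
bundles partition the items. -/
theorem robust_walrasian_prices_exist
    (m n : ℕ)
    (v : Fin m → Finset (Fin n) → ℤ)
    (hGS : ∀ (i : Fin m) (p p' : Fin n → ℝ), (∀ j, p j ≤ p' j) →
      ∀ S : Finset (Fin n),
        (∀ T, (v i T : ℝ) - ∑ j ∈ T, p j ≤ (v i S : ℝ) - ∑ j ∈ S, p j) →
        ∃ S', (∀ T, (v i T : ℝ) - ∑ j ∈ T, p' j ≤ (v i S' : ℝ) - ∑ j ∈ S', p' j) ∧
          ∀ j ∈ S, p j = p' j → j ∈ S')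
    (S : Fin m → Finset (Fin n))
    (hdisj : ∀ i1 i2, i1 ≠ i2 → Disjoint (S i1) (S i2))
    (hcover : ∀ j, ∃ i, j ∈ S i)
    (hopt : ∀ T : Fin m → Finset (Fin n),
      (∀ i1 i2, i1 ≠ i2 → Disjoint (T i1) (T i2)) → (∀ j, ∃ i, j ∈ T i) →
      ∑ i, v i (T i) ≤ ∑ i, v i (S i))
    (huniq : ∀ T : Fin m → Finset (Fin n),
      (∀ i1 i2, i1 ≠ i2 → Disjoint (T i1) (T i2)) → (∀ j, ∃ i, j ∈ T i) →
      ∑ i, v i (T i) = ∑ i, v i (S i) → T = S) :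
    let W : Set (Fin n → ℝ) := {p | ∃ T : Fin m → Finset (Fin n),
      (∀ i1 i2, i1 ≠ i2 → Disjoint (T i1) (T i2)) ∧ (∀ j, ∃ i, j ∈ T i) ∧
      ∀ i U, (v i U : ℝ) - ∑ j ∈ U, p j ≤ (v i (T i) : ℝ) - ∑ j ∈ T i, p j}
    (∃ p : Fin n → ℝ, ∀ p' : Fin n → ℝ,
        (∀ j, |p' j - p j| ≤ 1 / (2 * (n : ℝ))) → p' ∈ W) ∧
    Convex ℝ W ∧
    ∀ p' ∈ interior W, ∀ i,
      {U : Finset (Fin n) |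
        ∀ U', (v i U' : ℝ) - ∑ j ∈ U', p' j ≤ (v i U : ℝ) - ∑ j ∈ U, p' j} = {S i} := by
  classical
  intro W
  have hWeq : W = {p : Fin n → ℝ | ∀ i U,
      (v i U : ℝ) - ∑ j ∈ U, p j ≤ (v i (S i) : ℝ) - ∑ j ∈ S i, p j} := by
    apply Set.ext
    intro p
    constructor
    · rintro ⟨T, hTd, hTc, hT⟩
      have hTS : T = S := by
        have h2 := Finset.sum_le_sum (fun i (_ : i ∈ (univ : Finset (Fin m))) => hT i (S i))
        rw [Finset.sum_sub_distrib, Finset.sum_sub_distrib,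
          RobustWalras.sum_partition S hdisj hcover p,
          RobustWalras.sum_partition T hTd hTc p] at h2
        have hle : (∑ i, (v i (S i) : ℝ)) ≤ ∑ i, (v i (T i) : ℝ) := by linarith
        have hle2 : (∑ i, v i (S i)) ≤ ∑ i, v i (T i) := by exact_mod_cast hle
        exact huniq T hTd hTc (le_antisymm (hopt T hTd hTc) hle2)
      intro i U
      rw [← hTS]
      exact hT i U
    · intro h
      exact ⟨S, hdisj, hcover, fun i U => h i U⟩
  refine ⟨?_, ?_, ?_⟩
  · -- PART 1 : robust prices exist
    by_cases hn : n = 0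
    · subst hn
      refine ⟨0, fun p' _ => ?_⟩
      refine ⟨S, hdisj, hcover, fun i U => ?_⟩
      have hU : U = S i := by ext j; exact j.elim0
      rw [hU]
    · have hnpos : 0 < n := Nat.pos_of_ne_zero hn
      by_cases hm : m = 0
      · obtain ⟨i, -⟩ := hcover ⟨0, hnpos⟩
        exact absurd (i.2) (by omega)
      · have hmpos : 0 < m := Nat.pos_of_ne_zero hm
        have hn1 : (1:ℝ) ≤ (n:ℝ) := by exact_mod_cast hnpos
        set n2 : ℝ := 2*(n:ℝ) with hn2
        have hn2pos : 0 < n2 := by rw [hn2]; linarith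
        have hn2two : (2:ℝ) ≤ n2 := by rw [hn2]; linarith
        -- uniform bound on |v|
        obtain ⟨x, -, hx⟩ := Finset.exists_max_image
          (Finset.univ : Finset (Fin m × Finset (Fin n))) (fun x => |(v x.1 x.2 : ℝ)|)
          ⟨(⟨0, hmpos⟩, ∅), Finset.mem_univ _⟩
        set Vm : ℝ := |(v x.1 x.2 : ℝ)| with hVmdef
        have hVm : ∀ i T, |(v i T : ℝ)| ≤ Vm := fun i T => hx (i, T) (Finset.mem_univ _)
        have hVm0 : 0 ≤ Vm := abs_nonneg _
        set VB : ℝ := (2*(n:ℝ)+1) * Vm + n with hVB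
        have hVB0 : 0 ≤ VB := by rw [hVB]; positivity
        set B : ℝ := 2*VB + 2 with hB
        have hB0 : 0 ≤ B := by rw [hB]; linarith
        -- for every k, approximately robust prices exist
        have hPk : ∀ k : ℕ, ∃ p : Fin n → ℝ, (∀ j, p j ∈ Set.Icc (-B) B) ∧
            ∀ i U, (v i U : ℝ) - (v i (S i) : ℝ)
              ≤ ((∑ j ∈ U, p j) - ∑ j ∈ S i, p j)
                - (((U \ S i).card : ℝ) + ((S i \ U).card : ℝ))/n2 + 1/((k:ℝ)+1) := by
          intro k
          set e : ℝ := 1/((k:ℝ)+1) with he_def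
          have he : 0 < e := by rw [he_def]; positivity
          have he1 : e ≤ 1 := by
            rw [he_def, div_le_one (by positivity)]
            have : (0:ℝ) ≤ (k:ℝ) := Nat.cast_nonneg k
            linarith
          set c : ℝ := n2 + e with hc
          have hc2n : n2 ≤ c := by rw [hc]; linarith
          have hc2 : (2:ℝ) ≤ c := le_trans hn2two hc2n
          have hcpos : 0 < c := by linarith
          have hcone : (1:ℝ) ≤ c := by linarith
          set δ : ℝ := e/n2 with hδdef
          have hδ : 0 < δ := by rw [hδdef]; positivity
          have hδ1 : δ ≤ 1 := by
            rw [hδdef]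
            rw [div_le_one hn2pos]
            linarith
          have hδn2 : δ * n2 = e := by
            rw [hδdef]
            field_simp
          have hgsVt : RobustWalras.GS (RobustWalras.Vt c v S) :=
            RobustWalras.GS_Vt c v S hcpos hGS
          have hVtb : ∀ i T, |RobustWalras.Vt c v S i T| ≤ VB := by
            intro i T
            rw [RobustWalras.Vt]
            have h1 : |c * (v i T : ℝ)| ≤ (2*(n:ℝ)+1) * Vm := by
              rw [abs_mul, abs_of_pos hcpos]
              have hcle : c ≤ 2*(n:ℝ)+1 := by rw [hc, hn2]; linarith
              exact mul_le_mul hcle (hVm i T) (abs_nonneg _) (by positivity)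
            have h2 : |∑ j ∈ T, (if j ∈ S i then (-1:ℝ) else 1)| ≤ (n:ℝ) := by
              calc |∑ j ∈ T, (if j ∈ S i then (-1:ℝ) else 1)|
                  ≤ ∑ j ∈ T, |(if j ∈ S i then (-1:ℝ) else 1)| :=
                    Finset.abs_sum_le_sum_abs _ _
                _ ≤ ∑ j ∈ T, 1 := Finset.sum_le_sum (fun j _ => by split <;> simp)
                _ = (T.card : ℝ) := by simp
                _ ≤ (n:ℝ) := by
                    have := Finset.card_le_univ T
                    have h3 : T.card ≤ n := by simpa [Finset.card_univ] using this
                    exact_mod_cast h3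
            calc |c * (v i T : ℝ) + ∑ j ∈ T, (if j ∈ S i then (-1:ℝ) else 1)|
                ≤ |c * (v i T : ℝ)| + |∑ j ∈ T, (if j ∈ S i then (-1:ℝ) else 1)| := abs_add_le _ _
              _ ≤ VB := by rw [hVB]; linarith
          obtain ⟨q, Hf, hfd, hfc, hqb, happ⟩ :=
            RobustWalras.exists_approx_eq hmpos (RobustWalras.Vt c v S) hgsVt δ hδ VB hVtb
          -- the auction allocation must be S
          have hHfS : Hf = S := by
            by_contra hne
            have hsum := Finset.sum_le_sum
              (fun i (_ : i ∈ (univ : Finset (Fin m))) => happ i (S i))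
            rw [Finset.sum_sub_distrib, Finset.sum_sub_distrib, Finset.sum_sub_distrib,
              RobustWalras.sum_partition S hdisj hcover q,
              RobustWalras.sum_partition Hf hfd hfc q] at hsum
            have hcard1 : ∑ i, ((S i \ Hf i).card : ℝ) ≤ (n:ℝ) := by
              calc ∑ i, ((S i \ Hf i).card : ℝ)
                  ≤ ∑ i, ((S i).card : ℝ) := Finset.sum_le_sum (fun i _ => by
                    exact_mod_cast Finset.card_le_card Finset.sdiff_subset)
                _ = (n:ℝ) := RobustWalras.card_partition S hdisj hcover
            have hcard2 : ∑ i, ((Hf i \ S i).card : ℝ) ≤ (n:ℝ) := by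
              calc ∑ i, ((Hf i \ S i).card : ℝ)
                  ≤ ∑ i, ((Hf i).card : ℝ) := Finset.sum_le_sum (fun i _ => by
                    exact_mod_cast Finset.card_le_card Finset.sdiff_subset)
                _ = (n:ℝ) := RobustWalras.card_partition Hf hfd hfc
            have herr : ∑ i, δ * ((S i \ Hf i).card : ℝ) ≤ e/2 := by
              rw [← Finset.mul_sum]
              have h2 : δ * (∑ i, ((S i \ Hf i).card : ℝ)) ≤ δ * n :=
                mul_le_mul_of_nonneg_left hcard1 hδ.le
              have h3 : δ * (n:ℝ) = e/2 := by
                rw [hδdef, hn2]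
                field_simp
              linarith
            have hpt : ∀ i, RobustWalras.Vt c v S i (S i) - RobustWalras.Vt c v S i (Hf i)
                = c*((v i (S i):ℝ) - (v i (Hf i):ℝ))
                  - (((S i \ Hf i).card : ℝ) + ((Hf i \ S i).card : ℝ)) := by
              intro i
              have hw := RobustWalras.w_diff (S i) (Hf i)
              rw [RobustWalras.Vt, RobustWalras.Vt]
              linarith
            have e1 : ∑ i, (RobustWalras.Vt c v S i (S i) - RobustWalras.Vt c v S i (Hf i))
                = c*((∑ i, (v i (S i):ℝ)) - ∑ i, (v i (Hf i):ℝ))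
                  - ∑ i, (((S i \ Hf i).card : ℝ) + ((Hf i \ S i).card : ℝ)) := by
              rw [Finset.sum_congr rfl (fun i _ => hpt i), Finset.sum_sub_distrib,
                ← Finset.mul_sum, Finset.sum_sub_distrib]
            have e2 : ∑ i, (((S i \ Hf i).card : ℝ) + ((Hf i \ S i).card : ℝ)) ≤ 2*(n:ℝ) := by
              rw [Finset.sum_add_distrib]
              linarith
            by_cases hvEq : (∑ i, v i (Hf i)) = ∑ i, v i (S i)
            · exact hne (huniq Hf hfd hfc hvEq)
            · have hlt : (∑ i, v i (Hf i)) ≤ (∑ i, v i (S i)) - 1 := by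
                have := hopt Hf hfd hfc
                omega
              have hltR : (∑ i, (v i (Hf i) : ℝ)) ≤ (∑ i, (v i (S i) : ℝ)) - 1 := by
                exact_mod_cast hlt
              have e3 : c ≤ c*((∑ i, (v i (S i):ℝ)) - ∑ i, (v i (Hf i):ℝ)) := by
                have h4 : (1:ℝ) ≤ (∑ i, (v i (S i):ℝ)) - ∑ i, (v i (Hf i):ℝ) := by linarith
                nlinarith
              rw [Finset.sum_sub_distrib] at e1
              rw [hc, hn2] at e3
              rw [hc, hn2] at hc2n
              nlinarith [hsum, herr, e1, e2, e3, he]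
          rw [hHfS] at happ
          refine ⟨fun j => q j / c, ?_, ?_⟩
          · intro j
            obtain ⟨hq1, hq2⟩ := hqb j
            have hqabs : |q j| ≤ B := by
              rw [hB]
              rw [abs_le]
              constructor <;> linarith
            have habs2 : |q j / c| ≤ B := by
              rw [abs_div, abs_of_pos hcpos]
              calc |q j| / c ≤ |q j| := div_le_self (abs_nonneg _) hcone
                _ ≤ B := hqabs
            exact Set.mem_Icc.2 (abs_le.1 habs2)
          · intro i U
            have happU := happ i U
            rw [RobustWalras.Vt, RobustWalras.Vt] at happU
            have hwd := RobustWalras.w_diff (S i) U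
            have haN : ((U \ S i).card : ℝ) ≤ (n:ℝ) := by
              have := Finset.card_le_univ (U \ S i)
              have h3 : (U \ S i).card ≤ n := by simpa [Finset.card_univ] using this
              exact_mod_cast h3
            have hbN : ((S i \ U).card : ℝ) ≤ (n:ℝ) := by
              have := Finset.card_le_univ (S i \ U)
              have h3 : (S i \ U).card ≤ n := by simpa [Finset.card_univ] using this
              exact_mod_cast h3
            have ha0 : (0:ℝ) ≤ ((U \ S i).card : ℝ) := by positivity
            have hb0 : (0:ℝ) ≤ ((S i \ U).card : ℝ) := by positivity
            -- abbreviations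
            set a : ℝ := ((U \ S i).card : ℝ)
            set b : ℝ := ((S i \ U).card : ℝ)
            -- key arithmetic inequality
            have hKEY : (a+b)/n2 * c - e * c ≤ (a+b) - δ * a := by
              have h3n : 2*a + b ≤ n2*n2 := by
                have : n2*n2 ≥ 2*n2 := by nlinarith
                rw [hn2] at *
                nlinarith
              have h4 : e*(2*a+b) ≤ e*(n2*n2) := mul_le_mul_of_nonneg_left h3n he.le
              have h5 : (0:ℝ) ≤ e*e*n2 := by positivity
              have hdiv : (a+b)/n2 * c * n2 = (a+b) * c := by
                field_simp
              have hδa : δ * a * n2 = e * a := by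
                rw [hδdef]; field_simp
              rw [← sub_nonneg]
              have hmulpos : (0:ℝ) ≤ ((a+b) - δ*a - ((a+b)/n2*c - e*c)) * n2 := by
                have expand : ((a+b) - δ*a - ((a+b)/n2*c - e*c)) * n2
                    = (a+b)*n2 - e*a - (a+b)*c + e*c*n2 := by
                  have : ((a+b) - δ*a - ((a+b)/n2*c - e*c)) * n2
                      = (a+b)*n2 - (δ*a*n2) - ((a+b)/n2*c*n2) + e*c*n2 := by ring
                  rw [this, hδa, hdiv]
                rw [expand, hc]
                nlinarith [h4, h5]
              nlinarith [hmulpos, hn2pos]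
            -- turn the auction inequality into the goal
            have hpsum : ∀ A : Finset (Fin n),
                ∑ j ∈ A, (fun j => q j / c) j = (∑ j ∈ A, q j)/c := by
              intro A
              rw [Finset.sum_div]
            have hA : c * (v i U : ℝ) - c * (v i (S i) : ℝ)
                ≤ (∑ j ∈ U, q j) - (∑ j ∈ S i, q j) - (a+b) + δ * a := by
              linarith [happU, hwd]
            have hG' : ((v i U : ℝ) - (v i (S i) : ℝ) + (a+b)/n2 - e) * c
                ≤ (∑ j ∈ U, q j) - (∑ j ∈ S i, q j) := by
              have expand2 : ((v i U : ℝ) - (v i (S i) : ℝ) + (a+b)/n2 - e) * c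
                  = c * (v i U : ℝ) - c * (v i (S i) : ℝ) + ((a+b)/n2 * c - e * c) := by ring
              rw [expand2]
              have hadd := add_le_add hA hKEY
              have hring : (∑ j ∈ U, q j - ∑ j ∈ S i, q j - (a + b) + δ * a) + ((a+b) - δ * a)
                  = ∑ j ∈ U, q j - ∑ j ∈ S i, q j := by ring
              rw [hring] at hadd
              linarith [hadd]
            have hG := (le_div_iff₀ hcpos).2 hG'
            rw [hpsum U, hpsum (S i)]
            have hsub : ((∑ j ∈ U, q j) - (∑ j ∈ S i, q j))/c
                = (∑ j ∈ U, q j)/c - (∑ j ∈ S i, q j)/c := by ring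
            rw [hsub] at hG
            linarith [hG]
        choose pk hpkbox hpkineq using hPk
        -- compactness: extract a convergent subsequence
        have hboxcomp : IsCompact (Set.univ.pi (fun _ : Fin n => Set.Icc (-B) B)) :=
          isCompact_univ_pi (fun _ => isCompact_Icc)
        have hmem : ∀ k, pk k ∈ (Set.univ.pi (fun _ : Fin n => Set.Icc (-B) B)) := by
          intro k
          rw [Set.mem_univ_pi]
          exact fun j => hpkbox k j
        obtain ⟨pstar, -, φ, hφ, htend⟩ := hboxcomp.tendsto_subseq hmem
        have hstar : ∀ i U, (v i U : ℝ) - (v i (S i) : ℝ)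
            ≤ ((∑ j ∈ U, pstar j) - ∑ j ∈ S i, pstar j)
              - (((U \ S i).card : ℝ) + ((S i \ U).card : ℝ))/n2 := by
          intro i U
          have hFc : Continuous (fun p : Fin n → ℝ => (∑ j ∈ U, p j) - ∑ j ∈ S i, p j) :=
            (continuous_finset_sum _ (fun j _ => continuous_apply j)).sub
              (continuous_finset_sum _ (fun j _ => continuous_apply j))
          have htendF : Filter.Tendsto
              (fun k => (∑ j ∈ U, pk (φ k) j) - ∑ j ∈ S i, pk (φ k) j)
              Filter.atTop (𝓝 ((∑ j ∈ U, pstar j) - ∑ j ∈ S i, pstar j)) :=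
            (hFc.tendsto pstar).comp htend
          have htendE : Filter.Tendsto (fun k : ℕ => (1:ℝ)/((φ k : ℝ)+1))
              Filter.atTop (𝓝 0) :=
            tendsto_one_div_add_atTop_nhds_zero_nat.comp hφ.tendsto_atTop
          have htendsum : Filter.Tendsto
              (fun k => ((∑ j ∈ U, pk (φ k) j) - ∑ j ∈ S i, pk (φ k) j) + 1/((φ k : ℝ)+1))
              Filter.atTop
              (𝓝 (((∑ j ∈ U, pstar j) - ∑ j ∈ S i, pstar j) + 0)) :=
            htendF.add htendE
          rw [add_zero] at htendsum
          have hev : ∀ k : ℕ, (v i U : ℝ) - (v i (S i) : ℝ)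
              + (((U \ S i).card : ℝ) + ((S i \ U).card : ℝ))/n2
              ≤ ((∑ j ∈ U, pk (φ k) j) - ∑ j ∈ S i, pk (φ k) j) + 1/((φ k : ℝ)+1) := by
            intro k
            have := hpkineq (φ k) i U
            linarith
          have hlim := ge_of_tendsto htendsum (Filter.Eventually.of_forall hev)
          linarith
        -- the limit point gives robust prices
        refine ⟨pstar, fun p' hball => ?_⟩
        refine ⟨S, hdisj, hcover, fun i U => ?_⟩
        have h1 : ∑ j ∈ U \ S i, (pstar j - p' j) ≤ ((U \ S i).card : ℝ) * (1/n2) := by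
          have hcard : ∑ j ∈ U \ S i, (pstar j - p' j) ≤ (U \ S i).card • (1/n2) :=
            Finset.sum_le_card_nsmul _ _ _ (fun j _ => by
              have h2 : pstar j - p' j ≤ |p' j - pstar j| := by
                rw [abs_sub_comm]; exact le_abs_self _
              calc pstar j - p' j ≤ |p' j - pstar j| := h2
                _ ≤ 1 / (2*(n:ℝ)) := hball j
                _ = 1/n2 := by rw [hn2])
          rw [nsmul_eq_mul] at hcard
          linarith
        have h2 : ∑ j ∈ S i \ U, (p' j - pstar j) ≤ ((S i \ U).card : ℝ) * (1/n2) := by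
          have hcard : ∑ j ∈ S i \ U, (p' j - pstar j) ≤ (S i \ U).card • (1/n2) :=
            Finset.sum_le_card_nsmul _ _ _ (fun j _ => by
              calc p' j - pstar j ≤ |p' j - pstar j| := le_abs_self _
                _ ≤ 1 / (2*(n:ℝ)) := hball j
                _ = 1/n2 := by rw [hn2])
          rw [nsmul_eq_mul] at hcard
          linarith
        have hdp := RobustWalras.sum_sdiff_diff U (S i) pstar
        have hdp' := RobustWalras.sum_sdiff_diff U (S i) p'
        have hsplit1 : ∑ j ∈ U \ S i, (pstar j - p' j)
            = (∑ j ∈ U \ S i, pstar j) - ∑ j ∈ U \ S i, p' j := Finset.sum_sub_distrib _ _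
        have hsplit2 : ∑ j ∈ S i \ U, (p' j - pstar j)
            = (∑ j ∈ S i \ U, p' j) - ∑ j ∈ S i \ U, pstar j := Finset.sum_sub_distrib _ _
        have hX : ((∑ j ∈ U, pstar j) - ∑ j ∈ S i, pstar j)
            - ((∑ j ∈ U, p' j) - ∑ j ∈ S i, p' j)
            ≤ (((U \ S i).card : ℝ) + ((S i \ U).card : ℝ))/n2 := by
          rw [hdp, hdp']
          have h12 := add_le_add h1 h2
          rw [hsplit1, hsplit2] at h12
          have heq : (((U \ S i).card : ℝ) + ((S i \ U).card : ℝ))/n2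
              = ((U \ S i).card : ℝ) * (1/n2) + ((S i \ U).card : ℝ) * (1/n2) := by ring
          rw [heq]
          linarith
        linarith [hstar i U, hX]

  · -- PART 2 : convexity
    rw [hWeq]
    intro p1 hp1 p2 hp2 α β hα hβ hαβ
    intro i U
    have hsum : ∀ A : Finset (Fin n),
        ∑ j ∈ A, (α • p1 + β • p2) j = α * (∑ j ∈ A, p1 j) + β * (∑ j ∈ A, p2 j) := by
      intro A
      rw [Finset.mul_sum, Finset.mul_sum, ← Finset.sum_add_distrib]
      exact Finset.sum_congr rfl (fun j _ => by simp [smul_eq_mul])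
    rw [hsum, hsum]
    have e1 := mul_le_mul_of_nonneg_left (hp1 i U) hα
    have e2 := mul_le_mul_of_nonneg_left (hp2 i U) hβ
    have e3 : α * (v i U : ℝ) + β * (v i U : ℝ) = (v i U : ℝ) := by
      rw [← add_mul, hαβ, one_mul]
    have e4 : α * (v i (S i) : ℝ) + β * (v i (S i) : ℝ) = (v i (S i) : ℝ) := by
      rw [← add_mul, hαβ, one_mul]
    nlinarith [e1, e2, e3, e4]
  · -- PART 3 : unique demand in the interior
    intro p' hp' i
    have hp'W : p' ∈ W := interior_subset hp'
    rw [hWeq] at hp'W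
    apply Set.ext
    intro U
    simp only [Set.mem_setOf_eq, Set.mem_singleton_iff]
    constructor
    · intro hU
      obtain ⟨ε, hε, hball⟩ := Metric.mem_nhds_iff.1 (mem_interior_iff_mem_nhds.1 hp')
      set qq : Fin n → ℝ := fun j =>
        if j ∈ S i \ U then p' j + ε/2 else if j ∈ U \ S i then p' j - ε/2 else p' j with hqq
      have hqqW : qq ∈ W := by
        apply hball
        rw [Metric.mem_ball]
        rw [dist_pi_lt_iff hε]
        intro j
        rw [Real.dist_eq]
        have habs : |qq j - p' j| ≤ ε/2 := by
          simp only [hqq]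
          split_ifs with h1 h2
          · have he : p' j + ε/2 - p' j = ε/2 := by ring
            rw [he, abs_of_nonneg (by linarith)]
          · have he : p' j - ε/2 - p' j = -(ε/2) := by ring
            rw [he, abs_neg, abs_of_nonneg (by linarith)]
          · have he : p' j - p' j = (0:ℝ) := by ring
            rw [he, abs_zero]
            linarith
        linarith
      rw [hWeq] at hqqW
      have hkey := hqqW i U
      set a : ℝ := ((U \ S i).card : ℝ) with hadef
      set b : ℝ := ((S i \ U).card : ℝ) with hbdef
      have hsU : ∑ j ∈ U, qq j = (∑ j ∈ U, p' j) - (ε/2) * a := by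
        have hpt : ∀ j ∈ U, qq j = p' j + (if j ∈ U \ S i then -(ε/2) else 0) := by
          intro j hj
          rw [hqq]
          have h1 : j ∉ S i \ U := fun h => (Finset.mem_sdiff.1 h).2 hj
          by_cases h2 : j ∈ U \ S i <;> simp [h1, h2] <;> try ring
        rw [Finset.sum_congr rfl hpt, Finset.sum_add_distrib, Finset.sum_ite_mem]
        have hint : U ∩ (U \ S i) = U \ S i := Finset.inter_eq_right.2 Finset.sdiff_subset
        rw [hint, Finset.sum_const, hadef]
        push_cast
        ring
      have hsS : ∑ j ∈ S i, qq j = (∑ j ∈ S i, p' j) + (ε/2) * b := by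
        have hpt : ∀ j ∈ S i, qq j = p' j + (if j ∈ S i \ U then (ε/2) else 0) := by
          intro j hj
          rw [hqq]
          by_cases h1 : j ∈ S i \ U
          · simp [h1]
          · have h2 : j ∉ U \ S i := fun h => (Finset.mem_sdiff.1 h).2 hj
            simp [h1, h2]
            try ring
        rw [Finset.sum_congr rfl hpt, Finset.sum_add_distrib, Finset.sum_ite_mem]
        have hint : S i ∩ (S i \ U) = S i \ U := Finset.inter_eq_right.2 Finset.sdiff_subset
        rw [hint, Finset.sum_const, hbdef]
        push_cast
        ring
      rw [hsU, hsS] at hkey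
      have hUd := hU (S i)
      have hab : (ε/2) * (a + b) ≤ 0 := by linarith
      have ha : 0 ≤ a := by rw [hadef]; positivity
      have hb : 0 ≤ b := by rw [hbdef]; positivity
      have hab0 : a + b = 0 := by nlinarith
      have ha0 : a = 0 := by linarith
      have hb0 : b = 0 := by linarith
      have hUsub : U ⊆ S i := by
        rw [← Finset.sdiff_eq_empty_iff_subset]
        rw [hadef] at ha0
        exact Finset.card_eq_zero.1 (by exact_mod_cast ha0)
      have hSsub : S i ⊆ U := by
        rw [← Finset.sdiff_eq_empty_iff_subset]
        rw [hbdef] at hb0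
        exact Finset.card_eq_zero.1 (by exact_mod_cast hb0)
      exact Finset.Subset.antisymm hUsub hSsub
    · intro h
      rw [h]
      exact fun U' => hp'W i U'
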